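/- arXiv:1207.5258 — 2 statements merged into one kernel-verified Lean document; each statement's English description precedes it below -/
import Mathlib

section
/- Fix n ≥ 1 and 0 ≤ k ≤ n, and let M_k := {Z ∈ ℝ^{n×n} : rank Z = k}. Let X ∈ ℝ^{n×n} be a matrix whose metric projection onto M_k (with respect to the Frobenius norm) is a singleton {Y}. Then the orthogonal projection, with respect to the trace inner product, of X^∓ := (X⁺)ᵀ onto the tangent space T_Y M_k equals Y^∓ := (Y⁺)ᵀ; here T_Y M_k is the linear span of the tangent cone to M_k at Y, and Z⁺ denotes the Moore–Penrose inverse of a matrix Z. -/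
open Matrix

noncomputable section

/-- The Euclidean norm on `ℝⁿ` (vectors as functions). -/
def vnorm {n : ℕ} (x : Fin n → ℝ) : ℝ := Real.sqrt (∑ i, x i ^ 2)

/-- Euclidean distance from a point to a set in `ℝⁿ`. -/
def vdistSet {n : ℕ} (x : Fin n → ℝ) (Q : Set (Fin n → ℝ)) : ℝ :=
  sInf ((fun y => vnorm (x - y)) '' Q)

/-- The Frobenius norm of a real matrix. -/
def frobNorm {n m : ℕ} (A : Matrix (Fin n) (Fin m) ℝ) : ℝ :=
  Real.sqrt (∑ i, ∑ j, A i j ^ 2)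

/-- Frobenius distance from a matrix to a set of matrices. -/
def frobDistSet {n m : ℕ} (X : Matrix (Fin n) (Fin m) ℝ)
    (S : Set (Matrix (Fin n) (Fin m) ℝ)) : ℝ :=
  sInf ((fun Z => frobNorm (X - Z)) '' S)

/-- The metric projection (set of nearest points) for the Frobenius norm on matrices. -/
def mprojSet {n m : ℕ} (S : Set (Matrix (Fin n) (Fin m) ℝ)) (X : Matrix (Fin n) (Fin m) ℝ) :
    Set (Matrix (Fin n) (Fin m) ℝ) :=
  {Y ∈ S | frobNorm (X - Y) = frobDistSet X S}

/-- `B` is the Moore–Penrose inverse of `A` (the four Penrose equations). -/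
def IsMoorePenroseInv {n : ℕ} (A B : Matrix (Fin n) (Fin n) ℝ) : Prop :=
  A * B * A = A ∧ B * A * B = B ∧ (A * B)ᵀ = A * B ∧ (B * A)ᵀ = B * A

/-- The tangent space of a set `S` of matrices at `Y`: the linear span of the tangent cone
(the topology of entrywise convergence coincides with the Frobenius-norm topology). -/
def matTangentSp {n : ℕ} (S : Set (Matrix (Fin n) (Fin n) ℝ)) (Y : Matrix (Fin n) (Fin n) ℝ) :
    Submodule ℝ (Matrix (Fin n) (Fin n) ℝ) :=
  Submodule.span ℝ (tangentConeAt ℝ S Y)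

open Filter Topology

namespace MPaux

variable {n : ℕ}

abbrev Mat (n : ℕ) := Matrix (Fin n) (Fin n) ℝ

theorem trace_transpose_mul' (A B : Mat n) :
    trace (Aᵀ * B) = ∑ i, ∑ j, A i j * B i j := by
  simp only [Matrix.trace, Matrix.diag, Matrix.mul_apply, Matrix.transpose_apply]
  exact Finset.sum_comm

theorem factor_left {A B : Mat n}
    (h : LinearMap.ker B.mulVecLin ≤ LinearMap.ker A.mulVecLin) : ∃ M, A = M * B := by
  set f := A.mulVecLin with hf
  set g := B.mulVecLin with hg
  let fbar := (LinearMap.ker g).liftQ f h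
  let e := g.quotKerEquivRange
  obtain ⟨L, hL⟩ := LinearMap.exists_extend (fbar.comp (e.symm : LinearMap.range g →ₗ[ℝ] _))
  refine ⟨LinearMap.toMatrix' L, ?_⟩
  have hfg : f = L.comp g := by
    refine LinearMap.ext fun x => ?_
    have h2 : e.symm ⟨g x, LinearMap.mem_range_self g x⟩ = (LinearMap.ker g).mkQ x :=
      g.quotKerEquivRange_symm_apply_image x (LinearMap.mem_range_self g x)
    calc f x = fbar ((LinearMap.ker g).mkQ x) := rfl
    _ = (fbar.comp (e.symm : LinearMap.range g →ₗ[ℝ] _)) ⟨g x, LinearMap.mem_range_self g x⟩ := by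
          rw [LinearMap.comp_apply]; exact congrArg fbar h2.symm
    _ = (L ∘ₗ (LinearMap.range g).subtype) ⟨g x, LinearMap.mem_range_self g x⟩ := by rw [hL]
    _ = L.comp g x := rfl
  have key : A.mulVecLin = (LinearMap.toMatrix' L * B).mulVecLin := by
    rw [Matrix.mulVecLin_mul, ← hf, ← hg, hfg, ← Matrix.toLin'_apply', Matrix.toLin'_toMatrix']
  exact Matrix.toLin'.injective key

theorem factor_of_rank {Z P : Mat n} (h : (P * Z).rank = Z.rank) : ∃ M, Z = M * (P * Z) := by
  apply factor_left
  have hle : LinearMap.ker Z.mulVecLin ≤ LinearMap.ker (P * Z).mulVecLin := by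
    intro x hx
    simp only [LinearMap.mem_ker] at hx ⊢
    rw [Matrix.mulVecLin_mul, LinearMap.comp_apply, hx, map_zero]
  have heq : LinearMap.ker Z.mulVecLin = LinearMap.ker (P * Z).mulVecLin := by
    apply Submodule.eq_of_le_of_finrank_le hle
    have h1 := LinearMap.finrank_range_add_finrank_ker Z.mulVecLin
    have h2 := LinearMap.finrank_range_add_finrank_ker (P * Z).mulVecLin
    have hr : Module.finrank ℝ (LinearMap.range (P*Z).mulVecLin)
        = Module.finrank ℝ (LinearMap.range Z.mulVecLin) := h
    omega
  rw [heq]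

theorem factor_of_rank_right {Z Q : Mat n} (h : (Z * Q).rank = Z.rank) :
    ∃ N, Z = (Z * Q) * N := by
  have h' : (Qᵀ * Zᵀ).rank = Zᵀ.rank := by
    rw [← Matrix.transpose_mul, Matrix.rank_transpose, Matrix.rank_transpose]; exact h
  obtain ⟨M, hM⟩ := factor_of_rank h'
  refine ⟨Mᵀ, ?_⟩
  have := congrArg Matrix.transpose hM
  simpa [Matrix.transpose_mul, Matrix.mul_assoc] using this


set_option maxHeartbeats 800000 in
theorem tendsto_matmul {f g : ℕ → Mat n} {A B : Mat n}
    (hf : Tendsto f atTop (𝓝 A)) (hg : Tendsto g atTop (𝓝 B)) :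
    Tendsto (fun m => f m * g m) atTop (𝓝 (A * B)) := by
  have hc : Continuous fun p : Mat n × Mat n => p.1 * p.2 :=
    continuous_fst.matrix_mul continuous_snd
  exact (hc.tendsto (A, B)).comp (hf.prodMk_nhds hg)

/-- determinant of `1 + t • M` is eventually nonzero -/
theorem eventually_det_ne {ι : Type*} {l : Filter ι} (M : Mat n) {t : ι → ℝ}
    (ht : Tendsto t l (𝓝 0)) :
    ∀ᶠ s in l, IsUnit ((1 : Mat n) + t s • M).det := by
  have hc : Continuous fun u : ℝ => ((1 : Mat n) + u • M).det :=
    (continuous_const.add (continuous_id.smul continuous_const)).matrix_det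
  have h0 : ((1 : Mat n) + (0:ℝ) • M).det = 1 := by simp
  have := (hc.continuousAt (x := 0)).tendsto
  rw [h0] at this
  have h2 : Tendsto (fun s => ((1 : Mat n) + t s • M).det) l (𝓝 1) := this.comp ht
  filter_upwards [h2.eventually_ne one_ne_zero] with s hs
  exact isUnit_iff_ne_zero.mpr hs

theorem eventually_rank_col {ι : Type*} {l : Filter ι} (Y M : Mat n) {t : ι → ℝ}
    (ht : Tendsto t l (𝓝 0)) :
    ∀ᶠ s in l, (Y + t s • (Y * M)).rank = Y.rank := by
  filter_upwards [eventually_det_ne M ht] with s hs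
  have : Y + t s • (Y * M) = Y * (1 + t s • M) := by
    rw [mul_add, mul_one, mul_smul_comm]
  rw [this]
  exact Matrix.rank_mul_eq_left_of_isUnit_det _ _ hs

theorem eventually_rank_row {ι : Type*} {l : Filter ι} (Y N : Mat n) {t : ι → ℝ}
    (ht : Tendsto t l (𝓝 0)) :
    ∀ᶠ s in l, (Y + t s • (N * Y)).rank = Y.rank := by
  filter_upwards [eventually_det_ne N ht] with s hs
  have : Y + t s • (N * Y) = (1 + t s • N) * Y := by
    rw [add_mul, one_mul, smul_mul_assoc]
  rw [this]
  exact Matrix.rank_mul_eq_right_of_isUnit_det _ _ hs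

/-- membership in the tangent cone of the fixed rank set -/
theorem mem_tangentCone_of_factor (Y M : Mat n) :
    Y * M ∈ tangentConeAt ℝ {Z : Mat n | Z.rank = Y.rank} Y := by
  suffices h : ∃ (c : ℕ → ℝ) (d : ℕ → Mat n),
      (∀ᶠ m in atTop, Y + d m ∈ {Z : Mat n | Z.rank = Y.rank}) ∧
      Tendsto (fun m => ‖c m‖) atTop atTop ∧ Tendsto (fun m => c m • d m) atTop (𝓝 (Y * M)) by
    obtain ⟨c, d, h1, h2, h3⟩ := h
    exact mem_tangentConeAt_of_seq atTop c d (tangentConeAt.lim_zero atTop h2 h3) h1 h3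
  refine ⟨fun m => (m : ℝ) + 1, fun m => ((m : ℝ) + 1)⁻¹ • (Y * M), ?_, ?_, ?_⟩
  · have ht : Tendsto (fun m : ℕ => ((m : ℝ) + 1)⁻¹) atTop (𝓝 0) := by
      simpa using tendsto_one_div_add_atTop_nhds_zero_nat (𝕜 := ℝ)
    exact (eventually_rank_col Y M ht : _)
  · have : Tendsto (fun m : ℕ => (m : ℝ) + 1) atTop atTop :=
      tendsto_atTop_add_const_right _ 1 tendsto_natCast_atTop_atTop
    refine Tendsto.congr' ?_ this
    filter_upwards with m
    rw [Real.norm_eq_abs, abs_of_pos (by positivity)]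
  · have : ∀ m : ℕ, ((m : ℝ) + 1) • (((m : ℝ) + 1)⁻¹ • (Y * M)) = Y * M := by
      intro m
      rw [smul_smul, mul_inv_cancel₀ (by positivity), one_smul]
    simpa only [this] using tendsto_const_nhds


theorem rank_Z_factor {Y Yp D S : Mat n}
    (pen1 : Y * Yp * Y = Y)
    (hS : S = 1 + Yp * D * Yp * Y)
    (hu : IsUnit S.det)
    (hZ : (Y + D).rank = Y.rank) :
    Y + D = ((Y + D) * (Yp * Y)) * ((S⁻¹ * Yp) * ((Y * Yp) * (Y + D))) := by
  set P := Y * Yp with hP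
  set Q := Yp * Y with hQ
  set Z := Y + D with hZdef
  set G := S⁻¹ * Yp with hG
  have hPY : P * Y = Y := by rw [hP]; exact pen1
  have hYQ : Y * Q = Y := by rw [hQ, ← mul_assoc]; exact pen1
  have hPZQ : P * Z * Q = Y * S := by
    have : P * Z * Q = P * Y * Q + P * D * Q := by rw [hZdef]; noncomm_ring
    rw [this, hPY, hYQ, hS]
    rw [mul_add, mul_one]
    congr 1
    rw [hP, hQ]
    noncomm_ring
  have hrankA : (P * Z * Q).rank = Y.rank := by
    rw [hPZQ]
    exact Matrix.rank_mul_eq_left_of_isUnit_det S Y hu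
  have hPZ : (P * Z).rank = Z.rank := by
    refine le_antisymm (Matrix.rank_mul_le_right P Z) ?_
    calc Z.rank = (P * Z * Q).rank := by rw [hrankA, hZ]
    _ ≤ (P * Z).rank := Matrix.rank_mul_le_left (P * Z) Q
  have hZQ : (Z * Q).rank = Z.rank := by
    refine le_antisymm (Matrix.rank_mul_le_left Z Q) ?_
    calc Z.rank = (P * Z * Q).rank := by rw [hrankA, hZ]
    _ = (P * (Z * Q)).rank := by rw [mul_assoc]
    _ ≤ (Z * Q).rank := Matrix.rank_mul_le_right P (Z * Q)
  obtain ⟨M, hM⟩ := factor_of_rank hPZ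
  obtain ⟨N, hN⟩ := factor_of_rank_right hZQ
  have hAGA : (P * Z * Q) * G * (P * Z * Q) = P * Z * Q := by
    rw [hPZQ, hG]
    calc Y * S * (S⁻¹ * Yp) * (Y * S) = Y * (S * S⁻¹) * (Yp * Y) * S := by noncomm_ring
    _ = Y * S := by rw [Matrix.mul_nonsing_inv S hu, mul_one, ← hQ, hYQ]
  have hZQM : Z * Q = M * (P * Z * Q) := by conv_rhs => rw [← mul_assoc, ← hM]
  have hPZN : P * Z = (P * Z * Q) * N := by
    conv_lhs => rw [hN]
    noncomm_ring
  calc Z = (Z * Q) * N := hN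
  _ = (M * (P * Z * Q)) * N := by rw [← hZQM]
  _ = M * ((P * Z * Q) * G * (P * Z * Q)) * N := by rw [hAGA]
  _ = (M * (P * Z * Q)) * (G * ((P * Z * Q) * N)) := by noncomm_ring
  _ = (Z * Q) * (G * (P * Z)) := by rw [← hZQM, ← hPZN]


set_option maxHeartbeats 2000000 in
theorem cone_bound {Y Yp W : Mat n}
    (pen1 : Y * Yp * Y = Y)
    (hW : W ∈ tangentConeAt ℝ {Z : Mat n | Z.rank = Y.rank} Y) :
    (1 - Y * Yp) * W * (1 - Yp * Y) = 0 := by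
  haveI : FirstCountableTopology (Mat n) := inferInstanceAs (FirstCountableTopology (Fin n → Fin n → ℝ))
  obtain ⟨c, d, hd0, hmem, hcd⟩ := mem_tangentConeAt_iff_exists_seq.mp hW
  have hScont : Continuous fun D : Mat n => (1 : Mat n) + Yp * D * Yp * Y :=
    continuous_const.add
      (((continuous_const.matrix_mul continuous_id).matrix_mul
        continuous_const).matrix_mul continuous_const)
  have hS1 : Tendsto (fun m => (1 : Mat n) + Yp * d m * Yp * Y) atTop (𝓝 1) := by
    have := (hScont.tendsto 0).comp hd0
    simpa [Function.comp_def] using this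
  have hdet : Tendsto (fun m => ((1 : Mat n) + Yp * d m * Yp * Y).det) atTop (𝓝 1) := by
    have hdc : Continuous fun A : Mat n => A.det := continuous_id.matrix_det
    have := (hdc.tendsto 1).comp hS1
    simpa [Function.comp_def] using this
  have hu : ∀ᶠ m in atTop, IsUnit ((1 : Mat n) + Yp * d m * Yp * Y).det :=
    (hdet.eventually_ne one_ne_zero).mono fun m hm => isUnit_iff_ne_zero.mpr hm
  -- inverse tendsto
  have hGlim : Tendsto (fun m => ((1 : Mat n) + Yp * d m * Yp * Y)⁻¹) atTop (𝓝 1) := by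
    have hinv : ∀ m, ((1 : Mat n) + Yp * d m * Yp * Y)⁻¹
        = (((1 : Mat n) + Yp * d m * Yp * Y).det)⁻¹ •
          ((1 : Mat n) + Yp * d m * Yp * Y).adjugate := by
      intro m; rw [Matrix.inv_def, Ring.inverse_eq_inv']
    have hadj : Tendsto (fun m => ((1 : Mat n) + Yp * d m * Yp * Y).adjugate) atTop
        (𝓝 ((1 : Mat n).adjugate)) :=
      ((continuous_id.matrix_adjugate).tendsto 1).comp hS1
    have := (hdet.inv₀ one_ne_zero).smul hadj
    rw [Matrix.adjugate_one] at this
    simp only [inv_one, one_smul] at this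
    exact Tendsto.congr (fun m => (hinv m).symm) this
  -- limits
  have hlim1 : Tendsto (fun m => c m • ((1 - Y * Yp) * d m * (1 - Yp * Y))) atTop
      (𝓝 ((1 - Y * Yp) * W * (1 - Yp * Y))) := by
    have := tendsto_matmul (tendsto_matmul (tendsto_const_nhds (x := 1 - Y * Yp)) hcd)
      (tendsto_const_nhds (x := 1 - Yp * Y))
    refine this.congr fun m => ?_
    rw [mul_smul_comm, smul_mul_assoc]
  have hlim2 : Tendsto (fun m =>
      (c m • ((1 - Y * Yp) * d m * (Yp * Y))) *
        ((((1 : Mat n) + Yp * d m * Yp * Y)⁻¹ * Yp) * ((Y * Yp) * d m * (1 - Yp * Y))))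
      atTop (𝓝 0) := by
    have h1 : Tendsto (fun m => c m • ((1 - Y * Yp) * d m * (Yp * Y))) atTop
        (𝓝 ((1 - Y * Yp) * W * (Yp * Y))) := by
      have := tendsto_matmul (tendsto_matmul (tendsto_const_nhds (x := 1 - Y * Yp)) hcd)
        (tendsto_const_nhds (x := Yp * Y))
      refine this.congr fun m => ?_
      rw [mul_smul_comm, smul_mul_assoc]
    have h2 : Tendsto (fun m => ((1 : Mat n) + Yp * d m * Yp * Y)⁻¹ * Yp) atTop (𝓝 Yp) := by
      have := tendsto_matmul hGlim (tendsto_const_nhds (x := Yp))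
      simpa using this
    have h3 : Tendsto (fun m => (Y * Yp) * d m * (1 - Yp * Y)) atTop (𝓝 0) := by
      have := tendsto_matmul (tendsto_matmul (tendsto_const_nhds (x := Y * Yp)) hd0)
        (tendsto_const_nhds (x := 1 - Yp * Y))
      simpa using this
    have := tendsto_matmul h1 (tendsto_matmul h2 h3)
    simpa using this
  -- eventual equality
  have hkey : ∀ᶠ m in atTop, c m • ((1 - Y * Yp) * d m * (1 - Yp * Y))
      = (c m • ((1 - Y * Yp) * d m * (Yp * Y))) *
        ((((1 : Mat n) + Yp * d m * Yp * Y)⁻¹ * Yp) * ((Y * Yp) * d m * (1 - Yp * Y))) := by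
    filter_upwards [hmem, hu] with m hm hum
    have hZ : (Y + d m).rank = Y.rank := hm
    have hfac := rank_Z_factor pen1 rfl hum hZ
    -- convert d to Z := Y + d m
    have e1 : (1 - Y * Yp) * (Y + d m) = (1 - Y * Yp) * d m := by
      have : (1 - Y * Yp) * Y = 0 := by
        rw [sub_mul, one_mul, pen1, sub_self]
      rw [mul_add, this, zero_add]
    have e2 : (Y + d m) * (1 - Yp * Y) = d m * (1 - Yp * Y) := by
      have : Y * (1 - Yp * Y) = 0 := by
        rw [mul_sub, mul_one, ← mul_assoc, pen1, sub_self]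
      rw [add_mul, this, zero_add]
    have core : (1 - Y * Yp) * d m * (1 - Yp * Y)
        = ((1 - Y * Yp) * d m * (Yp * Y)) *
          ((((1 : Mat n) + Yp * d m * Yp * Y)⁻¹ * Yp) * ((Y * Yp) * d m * (1 - Yp * Y))) := by
      conv_lhs => rw [← e1, hfac]
      conv_lhs => simp only [mul_assoc]
      conv_lhs => rw [e2]
      conv_lhs => rw [← mul_assoc, e1]
      conv_lhs => simp only [mul_assoc]
      conv_rhs => simp only [mul_assoc]
    rw [core, smul_mul_assoc]
  have := tendsto_nhds_unique (hlim1.congr' hkey) hlim2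
  exact this


theorem eq_zero_of_trace_transpose_self {A : Mat n} (h : trace (Aᵀ * A) = 0) : A = 0 := by
  rw [trace_transpose_mul'] at h
  have h' : ∑ i, ∑ j, (A i j) ^ 2 = 0 := by
    rw [← h]; exact Finset.sum_congr rfl fun i _ => Finset.sum_congr rfl fun j _ => sq (A i j)
  have h2 := (Finset.sum_eq_zero_iff_of_nonneg fun i _ =>
    Finset.sum_nonneg fun j _ => sq_nonneg (A i j)).mp h'
  ext i j
  have h3 := (Finset.sum_eq_zero_iff_of_nonneg fun j _ => sq_nonneg (A i j)).mp
    (h2 i (Finset.mem_univ i)) j (Finset.mem_univ j)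
  simpa using pow_eq_zero_iff (n := 2) (by norm_num) |>.mp h3

theorem ip_nonpos {k : ℕ} {X Y B : Mat n}
    (hmin : ∀ Z : Mat n, Z.rank = k → frobNorm (X - Y) ≤ frobNorm (X - Z))
    (hrank : ∀ᶠ t in 𝓝[>] (0:ℝ), (Y + t • B).rank = k) :
    ∑ i, ∑ j, (X - Y) i j * B i j ≤ 0 := by
  set ip := ∑ i, ∑ j, (X - Y) i j * B i j with hip
  set SB := ∑ i, ∑ j, (B i j) ^ 2 with hSB
  have hev : ∀ᶠ t in 𝓝[>] (0:ℝ), ip ≤ t * SB / 2 := by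
    filter_upwards [hrank, self_mem_nhdsWithin] with t hZ (ht : (0:ℝ) < t)
    have h1 := hmin _ hZ
    -- squares
    have hs1 : (0:ℝ) ≤ ∑ i, ∑ j, ((X - Y) i j) ^ 2 :=
      Finset.sum_nonneg fun i _ => Finset.sum_nonneg fun j _ => sq_nonneg _
    have hsq : ∑ i, ∑ j, ((X - Y) i j) ^ 2 ≤ ∑ i, ∑ j, ((X - (Y + t • B)) i j) ^ 2 := by
      have ha := Real.sq_sqrt hs1
      have hs2 : (0:ℝ) ≤ ∑ i, ∑ j, ((X - (Y + t • B)) i j) ^ 2 :=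
        Finset.sum_nonneg fun i _ => Finset.sum_nonneg fun j _ => sq_nonneg _
      have hb := Real.sq_sqrt hs2
      calc ∑ i, ∑ j, ((X - Y) i j) ^ 2 = (frobNorm (X - Y)) ^ 2 := (Real.sq_sqrt hs1).symm
      _ ≤ (frobNorm (X - (Y + t • B))) ^ 2 := by
          apply pow_le_pow_left₀ (Real.sqrt_nonneg _) h1
      _ = _ := hb
    have hexp : ∑ i, ∑ j, ((X - (Y + t • B)) i j) ^ 2
        = (∑ i, ∑ j, ((X - Y) i j) ^ 2) - 2 * t * ip + t ^ 2 * SB := by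
      have e : ∀ i j, ((X - (Y + t • B)) i j) ^ 2
          = ((X - Y) i j) ^ 2 - 2 * t * ((X - Y) i j * B i j) + t ^ 2 * (B i j) ^ 2 := by
        intro i j
        simp only [Matrix.sub_apply, Matrix.add_apply, Matrix.smul_apply, smul_eq_mul]
        ring
      simp only [e, Finset.sum_add_distrib, Finset.sum_sub_distrib, ← Finset.mul_sum]
      rfl
    rw [hexp] at hsq
    nlinarith [sq_nonneg t]
  have hlim : Tendsto (fun t : ℝ => t * SB / 2) (𝓝[>] (0:ℝ)) (𝓝 0) := by
    have : Tendsto (fun t : ℝ => t * SB / 2) (𝓝 (0:ℝ)) (𝓝 ((0:ℝ) * SB / 2)) :=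
      (continuous_id.mul continuous_const).div_const 2 |>.tendsto 0
    rw [zero_mul, zero_div] at this
    exact this.mono_left nhdsWithin_le_nhds
  exact ge_of_tendsto hlim hev


end MPaux

open MPaux
set_option maxHeartbeats 2000000

/-- **Projection of the (transposed) Moore–Penrose inverse onto the tangent space.**
The conclusion states that `Ypᵀ` is the orthogonal projection of `Xpᵀ` onto `T_Y M_k`
with respect to the trace inner product: it lies in the tangent space, and the difference
is orthogonal to the tangent space. -/
theorem proj_moore_penrose_onto_tangent
    (n : ℕ) (hn : 1 ≤ n) (k : ℕ) (hk : k ≤ n)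
    (X Y Xp Yp : Matrix (Fin n) (Fin n) ℝ)
    (hY : mprojSet {Z : Matrix (Fin n) (Fin n) ℝ | Z.rank = k} X = {Y})
    (hXp : IsMoorePenroseInv X Xp) (hYp : IsMoorePenroseInv Y Yp) :
    Ypᵀ ∈ matTangentSp {Z : Matrix (Fin n) (Fin n) ℝ | Z.rank = k} Y ∧
      ∀ W ∈ matTangentSp {Z : Matrix (Fin n) (Fin n) ℝ | Z.rank = k} Y,
        Matrix.trace (Wᵀ * (Xpᵀ - Ypᵀ)) = 0 := by
  obtain ⟨x1, x2, x3, x4⟩ := hXp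
  obtain ⟨y1, y2, y3, y4⟩ := hYp
  -- unpack the projection hypothesis
  have hYin : Y ∈ mprojSet {Z : Matrix (Fin n) (Fin n) ℝ | Z.rank = k} X := by
    rw [hY]; exact rfl
  obtain ⟨hrankY, hYdist⟩ := hYin
  have hrankY : Y.rank = k := hrankY
  have hsetEq : {Z : Matrix (Fin n) (Fin n) ℝ | Z.rank = k}
      = {Z : Matrix (Fin n) (Fin n) ℝ | Z.rank = Y.rank} := by rw [hrankY]
  have hmin : ∀ Z : Matrix (Fin n) (Fin n) ℝ, Z.rank = k →
      frobNorm (X - Y) ≤ frobNorm (X - Z) := by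
    intro Z hZ
    rw [hYdist]
    apply csInf_le
    · refine ⟨0, ?_⟩
      rintro _ ⟨A, -, rfl⟩
      exact Real.sqrt_nonneg _
    · exact ⟨Z, hZ, rfl⟩
  have htid : Tendsto (fun t : ℝ => t) (𝓝[>] (0:ℝ)) (𝓝 0) :=
    tendsto_id.mono_left nhdsWithin_le_nhds
  -- column directions
  have hcol : ∀ M : Matrix (Fin n) (Fin n) ℝ,
      ∑ i, ∑ j, (X - Y) i j * (Y * M) i j ≤ 0 := by
    intro M
    apply ip_nonpos hmin
    filter_upwards [eventually_rank_col Y M htid] with t ht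
    rw [ht, hrankY]
  have hrow : ∀ N : Matrix (Fin n) (Fin n) ℝ,
      ∑ i, ∑ j, (X - Y) i j * (N * Y) i j ≤ 0 := by
    intro N
    apply ip_nonpos hmin
    filter_upwards [eventually_rank_row Y N htid] with t ht
    rw [ht, hrankY]
  -- trace identities
  have hcolEq : ∀ M : Matrix (Fin n) (Fin n) ℝ,
      Matrix.trace ((Y * M)ᵀ * (X - Y)) = 0 := by
    intro M
    have h1 := hcol M
    have h2 := hcol (-M)
    rw [Matrix.mul_neg] at h2
    simp only [Matrix.neg_apply, mul_neg, Finset.sum_neg_distrib, neg_nonpos] at h2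
    have : ∑ i, ∑ j, (X - Y) i j * (Y * M) i j = 0 := le_antisymm h1 h2
    rw [trace_transpose_mul']
    rw [← this]
    exact Finset.sum_congr rfl fun i _ => Finset.sum_congr rfl fun j _ => mul_comm _ _
  have hrowEq : ∀ N : Matrix (Fin n) (Fin n) ℝ,
      Matrix.trace ((N * Y)ᵀ * (X - Y)) = 0 := by
    intro N
    have h1 := hrow N
    have h2 := hrow (-N)
    rw [Matrix.neg_mul] at h2
    simp only [Matrix.neg_apply, mul_neg, Finset.sum_neg_distrib, neg_nonpos] at h2
    have : ∑ i, ∑ j, (X - Y) i j * (N * Y) i j = 0 := le_antisymm h1 h2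
    rw [trace_transpose_mul']
    rw [← this]
    exact Finset.sum_congr rfl fun i _ => Finset.sum_congr rfl fun j _ => mul_comm _ _
  -- the two first-order conditions
  have hYtR : Yᵀ * (X - Y) = 0 := by
    apply eq_zero_of_trace_transpose_self
    have := hcolEq (Yᵀ * (X - Y))
    rw [Matrix.transpose_mul, Matrix.mul_assoc] at this
    exact this
  have hRYt : (X - Y) * Yᵀ = 0 := by
    apply eq_zero_of_trace_transpose_self
    have h := hrowEq ((X - Y) * Yᵀ)
    calc Matrix.trace (((X - Y) * Yᵀ)ᵀ * ((X - Y) * Yᵀ))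
        = Matrix.trace ((((X - Y) * Yᵀ)ᵀ * (X - Y)) * Yᵀ) := by
          congr 1; simp only [Matrix.mul_assoc]
      _ = Matrix.trace (Yᵀ * (((X - Y) * Yᵀ)ᵀ * (X - Y))) := by rw [Matrix.trace_mul_comm]
      _ = Matrix.trace ((((X - Y) * Yᵀ) * Y)ᵀ * (X - Y)) := by
          rw [Matrix.transpose_mul ((X - Y) * Yᵀ) Y]; congr 1; simp only [Matrix.mul_assoc]
      _ = 0 := h
  have hYtX : Yᵀ * X = Yᵀ * Y := by
    have := hYtR; rwa [Matrix.mul_sub, sub_eq_zero] at this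
  have hXYt : X * Yᵀ = Y * Yᵀ := by
    have := hRYt; rwa [Matrix.sub_mul, sub_eq_zero] at this
  -- algebraic consequences
  have hYYpX : Y * Yp * X = Y := by
    calc Y * Yp * X = (Y * Yp)ᵀ * X := by rw [y3]
    _ = Ypᵀ * (Yᵀ * X) := by rw [Matrix.transpose_mul, Matrix.mul_assoc]
    _ = Ypᵀ * (Yᵀ * Y) := by rw [hYtX]
    _ = (Y * Yp)ᵀ * Y := by rw [Matrix.transpose_mul, Matrix.mul_assoc]
    _ = Y * Yp * Y := by rw [y3]
    _ = Y := y1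
  have hXYpY : X * Yp * Y = Y := by
    calc X * Yp * Y = X * (Yp * Y) := by rw [Matrix.mul_assoc]
    _ = X * (Yp * Y)ᵀ := by rw [y4]
    _ = (X * Yᵀ) * Ypᵀ := by rw [Matrix.transpose_mul, ← Matrix.mul_assoc]
    _ = (Y * Yᵀ) * Ypᵀ := by rw [hXYt]
    _ = Y * (Yp * Y)ᵀ := by rw [Matrix.transpose_mul, Matrix.mul_assoc]
    _ = Y * (Yp * Y) := by rw [y4]
    _ = Y := by rw [← Matrix.mul_assoc]; exact y1
  have hYXpX : Y * Xp * X = Y := by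
    calc Y * Xp * X = (Y * Yp * X) * Xp * X := by rw [hYYpX]
    _ = (Y * Yp) * (X * Xp * X) := by simp only [Matrix.mul_assoc]
    _ = (Y * Yp) * X := by rw [x1]
    _ = Y := hYYpX
  have hXXpY : X * Xp * Y = Y := by
    calc X * Xp * Y = X * Xp * (X * Yp * Y) := by rw [hXYpY]
    _ = (X * Xp * X) * Yp * Y := by simp only [Matrix.mul_assoc]
    _ = X * Yp * Y := by rw [x1]
    _ = Y := hXYpY
  have hYXp : Y * Xp = Y * Yp := by
    have hA : Y * Xp = (Y * Yp) * (X * Xp) := by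
      calc Y * Xp = (Y * Yp * X) * Xp := by rw [hYYpX]
      _ = (Y * Yp) * (X * Xp) := by simp only [Matrix.mul_assoc]
    have hT : (Y * Xp)ᵀ = Y * Yp := by
      rw [hA, Matrix.transpose_mul, x3, y3]
      calc (X * Xp) * (Y * Yp) = (X * Xp * Y) * Yp := by simp only [Matrix.mul_assoc]
      _ = Y * Yp := by rw [hXXpY]
    calc Y * Xp = ((Y * Xp)ᵀ)ᵀ := by rw [Matrix.transpose_transpose]
    _ = (Y * Yp)ᵀ := by rw [hT]
    _ = Y * Yp := y3
  have hXpY : Xp * Y = Yp * Y := by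
    have hA : Xp * Y = (Xp * X) * (Yp * Y) := by
      calc Xp * Y = Xp * (X * Yp * Y) := by rw [hXYpY]
      _ = (Xp * X) * (Yp * Y) := by simp only [Matrix.mul_assoc]
    have hT : (Xp * Y)ᵀ = Yp * Y := by
      rw [hA, Matrix.transpose_mul, x4, y4]
      calc (Yp * Y) * (Xp * X) = Yp * (Y * Xp * X) := by simp only [Matrix.mul_assoc]
      _ = Yp * Y := by rw [hYXpX]
    calc Xp * Y = ((Xp * Y)ᵀ)ᵀ := by rw [Matrix.transpose_transpose]
    _ = (Yp * Y)ᵀ := by rw [hT]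
    _ = Yp * Y := y4
  -- the projections of Xpᵀ
  have hG1 : Xp * (Y * Yp) = Yp := by
    calc Xp * (Y * Yp) = (Xp * Y) * Yp := by rw [Matrix.mul_assoc]
    _ = (Yp * Y) * Yp := by rw [hXpY]
    _ = Yp := y2
  have hG2 : (Yp * Y) * Xp = Yp := by
    calc (Yp * Y) * Xp = Yp * (Y * Xp) := by rw [Matrix.mul_assoc]
    _ = Yp * (Y * Yp) := by rw [hYXp]
    _ = Yp := by rw [← Matrix.mul_assoc]; exact y2
  have hPD : (Y * Yp) * (Xpᵀ - Ypᵀ) = 0 := by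
    have e1 : (Y * Yp) * Xpᵀ = Ypᵀ := by
      have := congrArg Matrix.transpose hG1
      rwa [Matrix.transpose_mul, y3] at this
    have e2 : (Y * Yp) * Ypᵀ = Ypᵀ := by
      have hy2' : Yp * (Y * Yp) = Yp := by rw [← Matrix.mul_assoc]; exact y2
      have := congrArg Matrix.transpose hy2'
      rwa [Matrix.transpose_mul, y3] at this
    rw [Matrix.mul_sub, e1, e2, sub_self]
  have hDQ : (Xpᵀ - Ypᵀ) * (Yp * Y) = 0 := by
    have e1 : Xpᵀ * (Yp * Y) = Ypᵀ := by
      have := congrArg Matrix.transpose hG2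
      rwa [Matrix.transpose_mul, y4] at this
    have e2 : Ypᵀ * (Yp * Y) = Ypᵀ := by
      have := congrArg Matrix.transpose y2
      rwa [Matrix.transpose_mul, y4] at this
    rw [Matrix.sub_mul, e1, e2, sub_self]
  constructor
  · -- membership
    have hfac : Y * (Yp * Ypᵀ) = Ypᵀ := by
      have hy2' : Yp * (Y * Yp) = Yp := by rw [← Matrix.mul_assoc]; exact y2
      have := congrArg Matrix.transpose hy2'
      rw [Matrix.transpose_mul, y3] at this
      rw [← Matrix.mul_assoc]
      exact this
    have hmem := mem_tangentCone_of_factor Y (Yp * Ypᵀ)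
    rw [hfac, ← hsetEq] at hmem
    exact Submodule.subset_span hmem
  · -- orthogonality
    intro W hW
    set D := Xpᵀ - Ypᵀ with hD
    have hDid : D = (1 - Y * Yp) * (D * (1 - Yp * Y)) := by
      have h1 : D * (1 - Yp * Y) = D := by
        rw [Matrix.mul_sub, Matrix.mul_one, hDQ, sub_zero]
      have h2 : (1 - Y * Yp) * D = D := by
        rw [Matrix.sub_mul, Matrix.one_mul, hPD, sub_zero]
      rw [h1, h2]
    -- W is in the kernel subspace
    have hker : ∀ V ∈ matTangentSp {Z : Matrix (Fin n) (Fin n) ℝ | Z.rank = k} Y,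
        (1 - Y * Yp) * V * (1 - Yp * Y) = 0 := by
      have hsub : matTangentSp {Z : Matrix (Fin n) (Fin n) ℝ | Z.rank = k} Y ≤
          LinearMap.ker ((LinearMap.mulRight ℝ (1 - Yp * Y)).comp
            (LinearMap.mulLeft ℝ (1 - Y * Yp))) := by
        rw [matTangentSp, Submodule.span_le]
        intro V hV
        rw [hsetEq] at hV
        have := cone_bound y1 hV
        simp only [SetLike.mem_coe, LinearMap.mem_ker, LinearMap.comp_apply,
          LinearMap.mulLeft_apply, LinearMap.mulRight_apply]
        exact this
      intro V hV
      have := hsub hV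
      simpa only [LinearMap.mem_ker, LinearMap.comp_apply, LinearMap.mulLeft_apply,
        LinearMap.mulRight_apply] using this
    have hWker := hker W hW
    have htr : (1 - Yp * Y)ᵀ = 1 - Yp * Y := by
      rw [Matrix.transpose_sub, Matrix.transpose_one, y4]
    have htl : (1 - Y * Yp)ᵀ = 1 - Y * Yp := by
      rw [Matrix.transpose_sub, Matrix.transpose_one, y3]
    calc Matrix.trace (Wᵀ * D)
        = Matrix.trace (Wᵀ * ((1 - Y * Yp) * (D * (1 - Yp * Y)))) := by rw [← hDid]
      _ = Matrix.trace ((Wᵀ * ((1 - Y * Yp) * D)) * (1 - Yp * Y)) := by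
          congr 1; simp only [Matrix.mul_assoc]
      _ = Matrix.trace ((1 - Yp * Y) * (Wᵀ * ((1 - Y * Yp) * D))) := by
          rw [Matrix.trace_mul_comm]
      _ = Matrix.trace ((((1 - Yp * Y) * Wᵀ) * (1 - Y * Yp)) * D) := by
          congr 1; simp only [Matrix.mul_assoc]
      _ = Matrix.trace (((1 - Y * Yp) * W * (1 - Yp * Y))ᵀ * D) := by
          rw [Matrix.transpose_mul, Matrix.transpose_mul, htr, htl]
          congr 1; simp only [Matrix.mul_assoc]
      _ = 0 := by rw [hWker]; simp
end
end

section
/- Let M₂ := {(x, y, x·y) ∈ ℝ³ : x > 0} and let p = (a, 0, c) with a > 0 and c ≠ 0. Then every point q in the closure of M₂ satisfying |p − q| = d(p, cl M₂) has nonzero second coordinate. (This computation underlies the fact that the Whitney stratification {M₁, M₂} of the set {(x,y,z) : z = xy, x ≥ 0}, with M₁ = {0}×ℝ×{0}, is not normally flat.) -/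
/-- **The nearest point on the closed surface `{z = xy, x ≥ 0}` to `(a,0,c)` with `a > 0`,
`c ≠ 0` has nonzero second coordinate** (so the Whitney stratification of this set by
`M₁ = {0}×ℝ×{0}` and `M₂ = {(x,y,xy) : x > 0}` is not normally flat). -/
theorem nearest_point_has_nonzero_second_coordinate
    (M₂ : Set (EuclideanSpace ℝ (Fin 3)))
    (hM₂ : M₂ = {q : EuclideanSpace ℝ (Fin 3) | 0 < q 0 ∧ q 2 = q 0 * q 1})
    (p : EuclideanSpace ℝ (Fin 3))
    (hp0 : 0 < p 0) (hp1 : p 1 = 0) (hp2 : p 2 ≠ 0) :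
    ∀ q ∈ closure M₂, dist p q = Metric.infDist p (closure M₂) → q 1 ≠ 0 := by
  intro q hq hmin hq1
  set a := p 0 with ha
  set c := p 2 with hc
  -- closure M₂ is contained in the closed set {q | q 2 = q 0 * q 1}
  have hsub : closure M₂ ⊆ {q : EuclideanSpace ℝ (Fin 3) | q 2 = q 0 * q 1} := by
    apply closure_minimal
    · rw [hM₂]; intro x hx; exact hx.2
    · have : IsClosed {q : EuclideanSpace ℝ (Fin 3) | q 2 - q 0 * q 1 = 0} := by
        apply isClosed_eq
        · exact Continuous.sub ((continuous_apply 2).comp (PiLp.continuous_ofLp 2 _))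
            (((continuous_apply 0).comp (PiLp.continuous_ofLp 2 _)).mul ((continuous_apply 1).comp (PiLp.continuous_ofLp 2 _)))
        · exact continuous_const
      convert this using 1
      ext x; simp [sub_eq_zero]
  have hq2 : q 2 = q 0 * q 1 := hsub hq
  rw [hq1, mul_zero] at hq2
  -- the competitor point
  set t : ℝ := a * c / (1 + a ^ 2) with ht
  set r : EuclideanSpace ℝ (Fin 3) := (WithLp.equiv 2 (Fin 3 → ℝ)).symm ![a, t, a * t] with hr
  have hr0 : r 0 = a := rfl
  have hr1 : r 1 = t := rfl
  have hr2 : r 2 = a * t := rfl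
  have hrM : r ∈ M₂ := by
    rw [hM₂]; exact ⟨by rw [hr0]; exact hp0, by rw [hr0, hr1, hr2]⟩
  have hle : Metric.infDist p (closure M₂) ≤ dist p r :=
    Metric.infDist_le_dist_of_mem (subset_closure hrM)
  have hlt : dist p r < dist p q := by
    rw [EuclideanSpace.dist_eq, EuclideanSpace.dist_eq]
    apply Real.sqrt_lt_sqrt
    · positivity
    rw [Fin.sum_univ_three, Fin.sum_univ_three]
    simp only [hr0, hr1, hr2, hq1, hq2, hp1, Real.dist_eq, sq_abs]
    have h1 : 1 + a ^ 2 > 0 := by positivity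
    have key : (a - a) ^ 2 + (0 - t) ^ 2 + (c - a * t) ^ 2 < (a - q 0) ^ 2 + (0 - 0) ^ 2 + (c - 0) ^ 2 := by
      have hq0 : (a - q 0) ^ 2 ≥ 0 := sq_nonneg _
      have ht' : t * (1 + a ^ 2) = a * c := by rw [ht]; exact div_mul_cancel₀ _ h1.ne'
      have hact : 0 < a * c * t := by
        have h2 : a * c * t = (a * c) ^ 2 / (1 + a ^ 2) := by rw [ht]; ring
        rw [h2]
        exact div_pos (pow_pos (abs_pos.mpr (mul_ne_zero hp0.ne' hp2)) 2 |>.trans_eq (by rw [sq_abs])) h1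
      have ht2 : t * (t * (1 + a ^ 2)) = t * (a * c) := by rw [ht']
      nlinarith [hact, ht2, hq0]
    exact key
  linarith [hmin ▸ hlt, hle]
end
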